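/- Fix reals c, q, L > 0, D ≥ 1 and Q₂ ≥ 0, and set y₀ := √(4c/(4D² − 1))·L and x₀ := √(4c/(4D² − 1))·(Q₂ + q/2). Then for every t₀ with 0 < t₀ < 1 there exists ε > 0 such that for all k ∈ ℕ the closed rectangle □_k := [X₂[k] − ε, X₂[k]] × [Y₂ − Δ_k, Y₂] is contained in B₂, where Y₂ := t₀·y₀, X₂[k] := t₀·(x₀ + k·q·y₀/L) and Δ_k := Y₂·ε/(X₂[k] + ε). -/

import Mathlib

open Real

noncomputable section

/-- the ellipse norm `‖(u₁,u₂)‖_@ = √(u₁² + c u₂²)`. -/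
def nAt (c : ℝ) (u : ℝ × ℝ) : ℝ := Real.sqrt (u.1 ^ 2 + c * u.2 ^ 2)

/-- `Θ_x = √(x² + c q²)`. -/
def thetaAt (c q x : ℝ) : ℝ := Real.sqrt (x ^ 2 + c * q ^ 2)

/-- the set `B₂`. -/
def B2 (c q L D Q2 : ℝ) : Set (ℝ × ℝ) :=
  {p | ∀ s i : ℤ, i ≠ 0 →
    D * q * |p.2| / thetaAt c q p.1 <
      nAt c
        (((s : ℝ) * q + (i : ℝ) * Q2) * p.1 * p.2 / (thetaAt c q p.1) ^ 2 -
            (i : ℝ) * L,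
          ((s : ℝ) * q + (i : ℝ) * Q2) * q * p.2 / (thetaAt c q p.1) ^ 2)}

private lemma aux2 (q c L D Y e y G : ℝ) (hY : 0 < Y) (hy : 0 < y)
    (hyY : y^2 ≤ Y^2)
    (hb : ((q*Y/2 - e)*y)^2 ≤ (G*Y)^2)
    (hbr : 0 < (q*Y/2 - e)^2 - q^2*D^2*Y^2 + q^2*c*L^2)
    (hcl : 0 ≤ q^2*(c*L^2)) :
    0 < G^2 + q^2*(c*L^2 - D^2*y^2) := by
  have t1 : 0 < y^2*((q*Y/2 - e)^2 - q^2*D^2*Y^2 + q^2*c*L^2) := mul_pos (pow_pos hy 2) hbr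
  have t2 : q^2*(c*L^2)*y^2 ≤ q^2*(c*L^2)*Y^2 := mul_le_mul_of_nonneg_left hyY hcl
  nlinarith [pow_pos hY 2, t1, t2, hb]

private lemma aux3 (S I q c L D y : ℝ) (hq : 0 < q)
    (hi4 : 4 ≤ I^2) (hfin : D^2*y^2 < 4*c*L^2) (hcl : 0 ≤ q^2*(c*L^2)) :
    0 < S^2 + q^2*(c*(I*L)^2 - D^2*y^2) := by
  have h2p : 0 < q^2*(4*c*L^2 - D^2*y^2) := mul_pos (pow_pos hq 2) (by linarith)
  have h3p : 0 ≤ q^2*(c*L^2)*(I^2-4) := mul_nonneg hcl (by linarith)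
  nlinarith [sq_nonneg S, h2p, h3p]

private lemma aux4 (c L D t₀ y : ℝ) (hcL : 0 < c*L^2) (hD : 1 ≤ D) (hD0 : 0 < D)
    (h1t : 0 < 1 - t₀^2) (h4D : 0 < 4*D^2-1)
    (hA1 : y^2*(4*D^2-1) ≤ 4*t₀^2*c*L^2) : D^2*y^2 < 4*c*L^2 := by
  have hD2 : 1 ≤ D^2 := by nlinarith
  have hquant : 0 < 4*D^2 - 1 - t₀^2*D^2 := by
    nlinarith [mul_nonneg h1t.le (sq_nonneg D)]
  have hDy4 := mul_le_mul_of_nonneg_left hA1 (sq_nonneg D)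
  nlinarith [hDy4, h4D, mul_pos hcL hquant]

set_option maxHeartbeats 1000000 in
theorem statement14
    (c q L D Q2 : ℝ) (hc : 0 < c) (hq : 0 < q) (hL : 0 < L) (hD : 1 ≤ D)
    (hQ2 : 0 ≤ Q2)
    (y₀ x₀ : ℝ)
    (hy₀ : y₀ = Real.sqrt (4 * c / (4 * D ^ 2 - 1)) * L)
    (hx₀ : x₀ = Real.sqrt (4 * c / (4 * D ^ 2 - 1)) * (Q2 + q / 2))
    (t₀ : ℝ) (ht₀ : 0 < t₀) (ht₀' : t₀ < 1) :
    ∃ ε > (0 : ℝ), ∀ k : ℕ,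
      Set.Icc (t₀ * (x₀ + (k : ℝ) * q * y₀ / L) - ε)
          (t₀ * (x₀ + (k : ℝ) * q * y₀ / L)) ×ˢ
        Set.Icc (t₀ * y₀ -
            t₀ * y₀ * ε / (t₀ * (x₀ + (k : ℝ) * q * y₀ / L) + ε))
          (t₀ * y₀) ⊆
        B2 c q L D Q2 := by
  have hD0 : (0:ℝ) < D := lt_of_lt_of_le one_pos hD
  have h4D : (0:ℝ) < 4*D^2 - 1 := by nlinarith
  have hr : (0:ℝ) ≤ 4*c/(4*D^2-1) := by positivity
  have hy₀sq : y₀^2 = 4*c/(4*D^2-1)*L^2 := by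
    rw [hy₀, mul_pow, Real.sq_sqrt hr]
  have hy₀pos : 0 < y₀ := by
    rw [hy₀]; exact mul_pos (Real.sqrt_pos.mpr (by positivity)) hL
  have hx₀pos : 0 < x₀ := by
    rw [hx₀]; exact mul_pos (Real.sqrt_pos.mpr (by positivity)) (by linarith)
  have hLx₀ : L * x₀ = y₀ * (Q2 + q/2) := by rw [hx₀, hy₀]; ring
  set Y : ℝ := t₀ * y₀ with hYdef
  have hYpos : 0 < Y := mul_pos ht₀ hy₀pos
  have hY2 : Y^2 * (4*D^2-1) = 4*t₀^2*c*L^2 := by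
    have hne : (4*D^2-1) ≠ 0 := ne_of_gt h4D
    rw [hYdef, mul_pow, hy₀sq]; field_simp
  have h1t : 0 < 1 - t₀^2 := by nlinarith
  set ε : ℝ := min (t₀*x₀/2) (min (q*Y/(2*L)) ((1-t₀^2)*c*L*q/(2*Y))) with hεdef
  have hεpos : 0 < ε := by
    apply lt_min (by positivity) (lt_min (by positivity) ?_)
    have : 0 < (1-t₀^2)*c*L*q := by positivity
    positivity
  have hεq : L*ε ≤ q*Y/2 := by
    have h2 : ε ≤ q*Y/(2*L) := le_trans (min_le_right _ _) (min_le_left _ _)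
    have heqL : L*(q*Y/(2*L)) = q*Y/2 := by field_simp
    linarith [mul_le_mul_of_nonneg_left h2 hL.le, heqL]
  have hεc : Y*(L*ε)*q ≤ (1-t₀^2)*c*L^2*q^2/2 := by
    have h3 : ε ≤ (1-t₀^2)*c*L*q/(2*Y) := le_trans (min_le_right _ _) (min_le_right _ _)
    have hYLq : (0:ℝ) ≤ Y*L*q := by positivity
    have heqY : Y*L*q*((1-t₀^2)*c*L*q/(2*Y)) = (1-t₀^2)*c*L^2*q^2/2 := by
      field_simp
    linarith [mul_le_mul_of_nonneg_left h3 hYLq, heqY]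
  have hbracket : 0 < (q*Y/2 - L*ε)^2 - q^2*D^2*Y^2 + q^2*c*L^2 := by
    have keyeq : (q*Y/2 - L*ε)^2 - q^2*D^2*Y^2 + q^2*c*L^2
        = (L*ε)^2 - q*Y*(L*ε) + q^2*c*L^2*(1-t₀^2)
          + (4*t₀^2*c*L^2 - Y^2*(4*D^2-1))*(q^2/4) := by ring
    rw [hY2] at keyeq
    have hpos2 : 0 < (1-t₀^2)*(c*L^2*q^2) := mul_pos h1t (by positivity)
    linarith [keyeq, hεc, sq_nonneg (L*ε), hpos2]
  refine ⟨ε, hεpos, ?_⟩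
  intro k
  set X : ℝ := t₀ * (x₀ + (k : ℝ) * q * y₀ / L) with hXdef
  have hkq : (0:ℝ) ≤ (k : ℝ) * q * y₀ / L := by positivity
  have hXpos : 0 < X := by
    rw [hXdef]; exact mul_pos ht₀ (by linarith)
  have hεX : ε ≤ t₀*x₀/2 := min_le_left _ _
  have hεX2 : ε ≤ X/2 := by
    have h0 : x₀ ≤ x₀ + (k:ℝ)*q*y₀/L := by linarith
    have h1 : t₀*x₀ ≤ X := by
      rw [hXdef]; exact mul_le_mul_of_nonneg_left h0 ht₀.le
    linarith
  have hX2 : L * X = Y * (Q2 + ((k:ℝ)+1/2)*q) := by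
    have e1 : L * X = t₀*(L*x₀) + t₀*((k:ℝ)*q*y₀) := by
      rw [hXdef]; field_simp
    rw [e1, hLx₀, hYdef]; ring
  clear hXdef hYdef hεdef hεX
  clear_value X ε Y
  intro p hp
  obtain ⟨x, y⟩ := p
  simp only [Set.mem_prod, Set.mem_Icc] at hp
  obtain ⟨⟨hx1, hx2⟩, hy1, hy2⟩ := hp
  have hXε : 0 < X + ε := by linarith
  have hΔlt : Y*ε/(X+ε) < Y := by
    rw [div_lt_iff₀ hXε]
    linarith [mul_pos hYpos hXpos]
  have hypos : 0 < y := by linarith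
  have hub : x*Y ≤ (X+ε)*y := by
    have e2 : (X+ε)*(Y - Y*ε/(X+ε)) = X*Y := by field_simp; ring
    calc x*Y ≤ X*Y := mul_le_mul_of_nonneg_right hx2 hYpos.le
      _ = (X+ε)*(Y - Y*ε/(X+ε)) := e2.symm
      _ ≤ (X+ε)*y := mul_le_mul_of_nonneg_left hy1 hXε.le
  have hlb : (X-ε)*y ≤ x*Y := by
    have g1 : (0:ℝ) ≤ (X-ε)*(Y-y) :=
      mul_nonneg (by linarith) (by linarith)
    have g2 : (0:ℝ) ≤ (x-(X-ε))*Y := mul_nonneg (by linarith) hYpos.le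
    linarith [g1, g2]
  have hAub : (L*x - Q2*y)*Y ≤ (((k:ℝ)+1/2)*q*Y + L*ε)*y := by
    have h := mul_le_mul_of_nonneg_left hub hL.le
    have h3 : L*(X+ε) = Y*(Q2+((k:ℝ)+1/2)*q) + L*ε := by rw [mul_add, hX2]
    calc (L*x - Q2*y)*Y = L*(x*Y) - Q2*y*Y := by ring
      _ ≤ L*((X+ε)*y) - Q2*y*Y := by linarith
      _ = (L*(X+ε))*y - Q2*Y*y := by ring
      _ = (Y*(Q2+((k:ℝ)+1/2)*q) + L*ε)*y - Q2*Y*y := by rw [h3]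
      _ = (((k:ℝ)+1/2)*q*Y + L*ε)*y := by ring
  have hAlb : (((k:ℝ)+1/2)*q*Y - L*ε)*y ≤ (L*x - Q2*y)*Y := by
    have h := mul_le_mul_of_nonneg_left hlb hL.le
    have h3 : L*(X-ε) = Y*(Q2+((k:ℝ)+1/2)*q) - L*ε := by rw [mul_sub, hX2]
    calc (((k:ℝ)+1/2)*q*Y - L*ε)*y
        = (Y*(Q2+((k:ℝ)+1/2)*q) - L*ε)*y - Q2*Y*y := by ring
      _ = (L*(X-ε))*y - Q2*Y*y := by rw [h3]
      _ = L*((X-ε)*y) - Q2*Y*y := by ring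
      _ ≤ L*(x*Y) - Q2*y*Y := by linarith
      _ = (L*x - Q2*y)*Y := by ring
  have hqYe : 0 ≤ (q*Y/2 - L*ε)*y := mul_nonneg (by linarith) hypos.le
  have hdist : ∀ m : ℤ, ((q*Y/2 - L*ε)*y)^2 ≤ (((m:ℝ)*q*y - (L*x - Q2*y))*Y)^2 := by
    intro m
    have hqyY : (0:ℝ) ≤ q*y*Y := by positivity
    rcases le_or_gt m (k:ℤ) with hm | hm
    · have hmr : (m:ℝ) ≤ (k:ℝ) := by exact_mod_cast hm
      have hmq := mul_le_mul_of_nonneg_right hmr hqyY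
      have hstep : (q*Y/2 - L*ε)*y ≤ ((L*x - Q2*y) - (m:ℝ)*q*y)*Y := by
        linarith [hAlb, hmq]
      have hsq := pow_le_pow_left₀ hqYe hstep 2
      calc ((q*Y/2 - L*ε)*y)^2 ≤ (((L*x-Q2*y) - (m:ℝ)*q*y)*Y)^2 := hsq
        _ = (((m:ℝ)*q*y - (L*x - Q2*y))*Y)^2 := by ring
    · have hmr : (k:ℝ)+1 ≤ (m:ℝ) := by
        have : (k:ℤ)+1 ≤ m := hm
        exact_mod_cast this
      have hmq := mul_le_mul_of_nonneg_right hmr hqyY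
      have hstep : (q*Y/2 - L*ε)*y ≤ ((m:ℝ)*q*y - (L*x - Q2*y))*Y := by
        linarith [hAub, hmq]
      exact pow_le_pow_left₀ hqYe hstep 2
  -- now the membership
  simp only [B2, Set.mem_setOf_eq]
  intro s i hi
  have hT : (0:ℝ) < x^2 + c*q^2 := by positivity
  have hθpos : 0 < thetaAt c q x := Real.sqrt_pos.mpr hT
  have hθ2 : thetaAt c q x ^ 2 = x^2 + c*q^2 := Real.sq_sqrt hT.le
  have hy2sq : y^2 ≤ Y^2 := pow_le_pow_left₀ hypos.le hy2 2
  have hcL : 0 < c*L^2 := by positivity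
  have hclq : (0:ℝ) ≤ q^2*(c*L^2) := by positivity
  have hA1 : y^2*(4*D^2-1) ≤ 4*t₀^2*c*L^2 := by
    have h := mul_le_mul_of_nonneg_right hy2sq h4D.le
    rw [hY2] at h; exact h
  set β : ℝ := (s:ℝ)*q + (i:ℝ)*Q2 with hβ
  have hcore : 0 < (β*y - (i:ℝ)*L*x)^2 + q^2*(c*((i:ℝ)*L)^2 - D^2*y^2) := by
    rcases (by omega : i = 1 ∨ i = -1 ∨ 2 ≤ i ∨ i ≤ -2) with hi1 | hi1 | hi1 | hi1
    · subst hi1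
      have hd := hdist s
      have hb : ((q*Y/2 - L*ε)*y)^2 ≤ ((β*y - ((1:ℤ):ℝ)*L*x)*Y)^2 := by
        have he : ((β*y - ((1:ℤ):ℝ)*L*x)*Y)^2 = (((s:ℝ)*q*y - (L*x - Q2*y))*Y)^2 := by
          rw [hβ]; push_cast; ring
        rw [he]; exact hd
      have h := aux2 q c L D Y (L*ε) y (β*y - ((1:ℤ):ℝ)*L*x) hYpos hypos hy2sq hb hbracket hclq
      push_cast at h ⊢
      linarith [h]
    · subst hi1
      have hd := hdist (-s)
      have hb : ((q*Y/2 - L*ε)*y)^2 ≤ ((β*y - ((-1:ℤ):ℝ)*L*x)*Y)^2 := by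
        have he : ((β*y - ((-1:ℤ):ℝ)*L*x)*Y)^2 = ((((-s:ℤ):ℝ)*q*y - (L*x - Q2*y))*Y)^2 := by
          rw [hβ]; push_cast; ring
        rw [he]; exact hd
      have h := aux2 q c L D Y (L*ε) y (β*y - ((-1:ℤ):ℝ)*L*x) hYpos hypos hy2sq hb hbracket hclq
      push_cast at h ⊢
      linarith [h]
    · have hi4 : (4:ℝ) ≤ (i:ℝ)^2 := by
        have h4z : (4:ℤ) ≤ i^2 := by nlinarith [hi1]
        exact_mod_cast h4z
      have hfin : D^2*y^2 < 4*c*L^2 := aux4 c L D t₀ y hcL hD hD0 h1t h4D hA1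
      exact aux3 (β*y - (i:ℝ)*L*x) ((i:ℝ)) q c L D y hq hi4 hfin hclq
    · have hi4 : (4:ℝ) ≤ (i:ℝ)^2 := by
        have h4z : (4:ℤ) ≤ i^2 := by nlinarith [hi1]
        exact_mod_cast h4z
      have hfin : D^2*y^2 < 4*c*L^2 := aux4 c L D t₀ y hcL hD hD0 h1t h4D hA1
      exact aux3 (β*y - (i:ℝ)*L*x) ((i:ℝ)) q c L D y hq hi4 hfin hclq
  show D * q * |y| / thetaAt c q x < nAt c _
  rw [abs_of_pos hypos]
  rw [show nAt c (β * x * y / thetaAt c q x ^ 2 - (i:ℝ) * L,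
        β * q * y / thetaAt c q x ^ 2)
      = Real.sqrt ((β * x * y / thetaAt c q x ^ 2 - (i:ℝ) * L)^2
        + c * (β * q * y / thetaAt c q x ^ 2)^2) from rfl]
  rw [Real.lt_sqrt (by positivity)]
  rw [div_pow, hθ2]
  have hident : (β*x*y/(x^2+c*q^2) - (i:ℝ)*L)^2 + c*(β*q*y/(x^2+c*q^2))^2
      = ((D*q*y)^2 + ((β*y - (i:ℝ)*L*x)^2 + q^2*(c*((i:ℝ)*L)^2 - D^2*y^2)))/(x^2+c*q^2) := by
    field_simp
    ring
  rw [hident, div_lt_div_iff₀ hT hT]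
  exact mul_lt_mul_of_pos_right (by linarith) hT
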